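/- The restriction of φ_k to {(p,q) ∈ ℝ² : q ≠ 0} induces a diffeomorphism from (ℝ×ℝ*)/ℤ onto A_{2k} \ {0}, where φ_k(p,q) = (q^k cos(2πp/q), q^k sin(2πp/q), q). -/

import Mathlib

open Real

/-- The map `φ_k(p,q) = (q^k cos(2πp/q), q^k sin(2πp/q), q)`. -/
noncomputable def phiMap (k : ℕ) (v : ℝ × ℝ) : ℝ × ℝ × ℝ :=
  (v.2 ^ k * Real.cos (2 * π * v.1 / v.2),
   v.2 ^ k * Real.sin (2 * π * v.1 / v.2), v.2)

/-- The `ℤ`-action relation on `ℝ × ℝ*`: `(p,q) ∼ (p + nq, q)`. -/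
def zRel (a b : {v : ℝ × ℝ // v.2 ≠ 0}) : Prop :=
  ∃ n : ℤ, b.val.1 = a.val.1 + n * a.val.2 ∧ b.val.2 = a.val.2

lemma cosSinEq {a b : ℝ} (hc : Real.cos a = Real.cos b) (hs : Real.sin a = Real.sin b) :
    ∃ n : ℤ, a = b + n * (2 * π) := by
  have h : Complex.exp (a * Complex.I) = Complex.exp (b * Complex.I) := by
    rw [Complex.exp_mul_I, Complex.exp_mul_I, ← Complex.ofReal_cos, ← Complex.ofReal_cos,
      ← Complex.ofReal_sin, ← Complex.ofReal_sin, hc, hs]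
  obtain ⟨n, hn⟩ := Complex.exp_eq_exp_iff_exists_int.1 h
  refine ⟨n, ?_⟩
  have h2 : (a : ℂ) * Complex.I = ((b : ℝ) + (n : ℝ) * (2 * π) : ℝ) * Complex.I := by
    push_cast
    rw [hn]; ring
  have := mul_right_cancel₀ Complex.I_ne_zero h2
  exact_mod_cast this

lemma argNegRel (c : ℂ) (hc : c ≠ 0) :
    ∃ n : ℤ, Complex.arg c = (Complex.arg (-c) + π) + n * (2 * π) := by
  have hnc : -c ≠ 0 := neg_ne_zero.2 hc
  apply cosSinEq
  · rw [Real.cos_add_pi, Complex.cos_arg hc, Complex.cos_arg hnc]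
    simp [neg_div]
  · rw [Real.sin_add_pi, Complex.sin_arg, Complex.sin_arg]
    simp [neg_div]

noncomputable def secMap (k : ℕ) (w : ℝ × ℝ × ℝ) : ℝ × ℝ :=
  (w.2.2 * Complex.arg ((w.1 + w.2.1 * Complex.I) / (w.2.2 : ℂ) ^ k) / (2 * π), w.2.2)

lemma phiSurf (k : ℕ) (v : ℝ × ℝ) :
    (phiMap k v).1 ^ 2 + (phiMap k v).2.1 ^ 2 = (phiMap k v).2.2 ^ (2 * k) := by
  simp only [phiMap]
  have h := Real.sin_sq_add_cos_sq (2 * π * v.1 / v.2)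
  have h2 : v.2 ^ (2 * k) = (v.2 ^ k) ^ 2 := by rw [← pow_mul, mul_comm]
  rw [h2]; nlinarith [h]

lemma phiResp (k : ℕ) (p q : ℝ) (hq : q ≠ 0) (n : ℤ) :
    phiMap k (p + n * q, q) = phiMap k (p, q) := by
  have key : 2 * π * (p + n * q) / q = 2 * π * p / q + n * (2 * π) := by
    field_simp
  simp only [phiMap, key, Real.cos_add_int_mul_two_pi, Real.sin_add_int_mul_two_pi]

lemma secPhi (k : ℕ) (v : ℝ × ℝ) (hv : v.2 ≠ 0) :
    ∃ m : ℤ, secMap k (phiMap k v) = (v.1 + m * v.2, v.2) := by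
  have hqk : ((v.2 : ℂ)) ^ k ≠ 0 := pow_ne_zero _ (by exact_mod_cast hv)
  have hc : ((v.2 ^ k * Real.cos (2 * π * v.1 / v.2) : ℝ) +
        (v.2 ^ k * Real.sin (2 * π * v.1 / v.2) : ℝ) * Complex.I) / (v.2 : ℂ) ^ k
      = Complex.exp ((2 * π * v.1 / v.2 : ℝ) * Complex.I) := by
    rw [Complex.exp_mul_I, ← Complex.ofReal_cos, ← Complex.ofReal_sin, div_eq_iff hqk]
    push_cast
    ring
  have hcos : Real.cos (Complex.arg (Complex.exp ((2 * π * v.1 / v.2 : ℝ) * Complex.I)))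
      = Real.cos (2 * π * v.1 / v.2) := by
    rw [Complex.cos_arg (Complex.exp_ne_zero _), Complex.norm_exp_ofReal_mul_I,
      Complex.exp_ofReal_mul_I_re, div_one]
  have hsin : Real.sin (Complex.arg (Complex.exp ((2 * π * v.1 / v.2 : ℝ) * Complex.I)))
      = Real.sin (2 * π * v.1 / v.2) := by
    rw [Complex.sin_arg, Complex.norm_exp_ofReal_mul_I, Complex.exp_ofReal_mul_I_im, div_one]
  obtain ⟨m, hm⟩ := cosSinEq hcos hsin
  refine ⟨m, ?_⟩
  simp only [secMap, phiMap, hc, hm, Prod.mk.injEq, and_true]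
  have hπ : (π : ℝ) ≠ 0 := Real.pi_ne_zero
  field_simp

lemma absC (k : ℕ) (w : ℝ × ℝ × ℝ) (hz : w.2.2 ≠ 0)
    (hs : w.1 ^ 2 + w.2.1 ^ 2 = w.2.2 ^ (2 * k)) :
    ‖(w.1 + w.2.1 * Complex.I) / (w.2.2 : ℂ) ^ k‖ = 1 := by
  have h2 : Complex.normSq ((w.1 + w.2.1 * Complex.I) / (w.2.2 : ℂ) ^ k) = 1 := by
    rw [Complex.normSq_div, Complex.normSq_add_mul_I, map_pow, Complex.normSq_ofReal, hs,
      div_eq_one_iff_eq (by positivity)]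
    ring
  have habs : ‖(w.1 + w.2.1 * Complex.I) / (w.2.2 : ℂ) ^ k‖ ^ 2 = 1 := by
    rw [Complex.sq_norm, h2]
  nlinarith [habs, norm_nonneg ((w.1 + w.2.1 * Complex.I) / (w.2.2 : ℂ) ^ k)]

lemma zNe (k : ℕ) (hk : 2 ≤ k) (w : ℝ × ℝ × ℝ)
    (hs : w.1 ^ 2 + w.2.1 ^ 2 = w.2.2 ^ (2 * k)) (h0 : w ≠ 0) : w.2.2 ≠ 0 := by
  intro hz
  rw [hz] at hs
  rw [zero_pow (by omega)] at hs
  have hx : w.1 = 0 := by nlinarith [sq_nonneg w.1, sq_nonneg w.2.1]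
  have hy : w.2.1 = 0 := by nlinarith [sq_nonneg w.1, sq_nonneg w.2.1]
  exact h0 (by rw [Prod.ext_iff, Prod.ext_iff]; exact ⟨hx, hy, hz⟩)

lemma phiSec (k : ℕ) (w : ℝ × ℝ × ℝ) (hz : w.2.2 ≠ 0)
    (hs : w.1 ^ 2 + w.2.1 ^ 2 = w.2.2 ^ (2 * k)) :
    phiMap k (secMap k w) = w := by
  set c : ℂ := (w.1 + w.2.1 * Complex.I) / (w.2.2 : ℂ) ^ k with hcdef
  have hqk : ((w.2.2 : ℂ)) ^ k ≠ 0 := pow_ne_zero _ (by exact_mod_cast hz)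
  have habs : ‖c‖ = 1 := absC k w hz hs
  have hc0 : c ≠ 0 := by intro h; rw [h] at habs; simp at habs
  have hmul : ((w.2.2 ^ k : ℝ) : ℂ) * c = w.1 + w.2.1 * Complex.I := by
    rw [hcdef]; push_cast; rw [mul_div_cancel₀ _ hqk]
  have hre : w.2.2 ^ k * c.re = w.1 := by
    have := congrArg Complex.re hmul
    simpa [← Complex.ofReal_pow] using this
  have him : w.2.2 ^ k * c.im = w.2.1 := by
    have := congrArg Complex.im hmul
    simpa [← Complex.ofReal_pow] using this
  have hθ : 2 * π * (w.2.2 * Complex.arg c / (2 * π)) / w.2.2 = Complex.arg c := by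
    have hπ : (π : ℝ) ≠ 0 := Real.pi_ne_zero
    field_simp
  simp only [phiMap, secMap]
  rw [hθ, Complex.cos_arg hc0, Complex.sin_arg, habs, div_one, div_one, hre, him]

lemma contDiffAt_arg' {z : ℂ} (h : z ∈ Complex.slitPlane) :
    ContDiffAt ℝ (⊤ : ℕ∞) Complex.arg z := by
  have h1 : ContDiffAt ℝ (⊤ : ℕ∞) (fun z : ℂ => (Complex.log z).im) z :=
    Complex.imCLM.contDiff.contDiffAt.comp _ ((Complex.contDiffAt_log h).restrict_scalars ℝ)
  exact h1.congr_of_eventuallyEq (Filter.Eventually.of_forall fun z => (Complex.log_im z).symm)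

lemma phiSmooth (k : ℕ) : ContDiffOn ℝ (⊤ : ℕ∞) (phiMap k) {v : ℝ × ℝ | v.2 ≠ 0} := by
  intro v hv
  apply ContDiffAt.contDiffWithinAt
  have h1 : ContDiffAt ℝ (⊤ : ℕ∞) (fun v : ℝ × ℝ => 2 * π * v.1 / v.2) v :=
    ContDiffAt.div (contDiffAt_const.mul contDiffAt_fst) contDiffAt_snd hv
  exact ((contDiffAt_snd.pow k).mul h1.cos).prodMk
    (((contDiffAt_snd.pow k).mul h1.sin).prodMk contDiffAt_snd)

lemma localInv (k : ℕ) (a : ℝ × ℝ) (ha : a.2 ≠ 0) :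
    ∃ (U : Set (ℝ × ℝ)) (V : Set (ℝ × ℝ × ℝ)) (ψ : ℝ × ℝ × ℝ → ℝ × ℝ),
      IsOpen U ∧ a ∈ U ∧ IsOpen V ∧ phiMap k a ∈ V ∧
      ContDiffOn ℝ (⊤ : ℕ∞) ψ V ∧
      ∀ b ∈ U, phiMap k b ∈ V ∧ ψ (phiMap k b) = b := by
  have hπ : (π : ℝ) ≠ 0 := Real.pi_ne_zero
  set θ₀ : ℝ := 2 * π * a.1 / a.2 with hθ₀
  set E : ℂ := Complex.exp ((θ₀ : ℝ) * Complex.I) with hE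
  have hE0 : E ≠ 0 := Complex.exp_ne_zero _
  set c : ℝ × ℝ × ℝ → ℂ := fun w => ((w.1 : ℂ) + (w.2.1 : ℂ) * Complex.I) /
      ((w.2.2 : ℂ) ^ k * E) with hc
  -- key computation
  have key : ∀ b : ℝ × ℝ, b.2 ≠ 0 →
      c (phiMap k b) = Complex.exp ((2 * π * b.1 / b.2 - θ₀ : ℝ) * Complex.I) := by
    intro b hb
    have hqk : ((b.2 : ℂ)) ^ k ≠ 0 := pow_ne_zero _ (by exact_mod_cast hb)
    have hnum : ((b.2 ^ k * Real.cos (2 * π * b.1 / b.2) : ℝ) : ℂ) +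
        ((b.2 ^ k * Real.sin (2 * π * b.1 / b.2) : ℝ) : ℂ) * Complex.I
        = (b.2 : ℂ) ^ k * Complex.exp ((2 * π * b.1 / b.2 : ℝ) * Complex.I) := by
      rw [Complex.exp_mul_I, ← Complex.ofReal_cos, ← Complex.ofReal_sin]
      push_cast; ring
    show (_ : ℂ) / _ = _
    rw [show (phiMap k b).1 = (b.2 ^ k * Real.cos (2 * π * b.1 / b.2) : ℝ) from rfl,
      show (phiMap k b).2.1 = (b.2 ^ k * Real.sin (2 * π * b.1 / b.2) : ℝ) from rfl,
      show (phiMap k b).2.2 = b.2 from rfl, hnum, hE,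
      mul_div_mul_left _ _ hqk, ← Complex.exp_sub]
    congr 1
    push_cast; ring
  have hslitmem : ∀ α : ℝ, α ∈ Set.Ioo (-π) π →
      Complex.exp ((α : ℝ) * Complex.I) ∈ Complex.slitPlane := by
    intro α hα
    rw [Complex.mem_slitPlane_iff, Complex.exp_ofReal_mul_I_re, Complex.exp_ofReal_mul_I_im]
    by_cases hs : Real.sin α = 0
    · left
      have : α = 0 := (Real.sin_eq_zero_iff_of_lt_of_lt hα.1 hα.2).1 hs
      rw [this, Real.cos_zero]; norm_num
    · right; exact hs
  have hargexp : ∀ α : ℝ, α ∈ Set.Ioo (-π) π →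
      Complex.arg (Complex.exp ((α : ℝ) * Complex.I)) = α := by
    intro α hα
    rw [Complex.exp_mul_I]
    exact Complex.arg_cos_add_sin_mul_I ⟨hα.1, le_of_lt hα.2⟩
  refine ⟨{v : ℝ × ℝ | v.2 ≠ 0 ∧ 2 * π * v.1 / v.2 ∈ Set.Ioo (θ₀ - π) (θ₀ + π)},
    {w : ℝ × ℝ × ℝ | w.2.2 ≠ 0 ∧ c w ∈ Complex.slitPlane},
    fun w => (w.2.2 * (Complex.arg (c w) + θ₀) / (2 * π), w.2.2), ?_, ?_, ?_, ?_, ?_, ?_⟩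
  · -- U open
    have : {v : ℝ × ℝ | v.2 ≠ 0 ∧ 2 * π * v.1 / v.2 ∈ Set.Ioo (θ₀ - π) (θ₀ + π)} =
        {v : ℝ × ℝ | v.2 ≠ 0} ∩ (fun v : ℝ × ℝ => 2 * π * v.1 / v.2) ⁻¹'
          Set.Ioo (θ₀ - π) (θ₀ + π) := rfl
    rw [this]
    refine ContinuousOn.isOpen_inter_preimage ?_ ?_ isOpen_Ioo
    · exact ContinuousOn.div (by fun_prop) (by fun_prop) fun v hv => hv
    · exact isOpen_ne_fun continuous_snd continuous_const
  · exact ⟨ha, by constructor <;> [linarith [Real.pi_pos]; linarith [Real.pi_pos]]⟩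
  · -- V open
    have : {w : ℝ × ℝ × ℝ | w.2.2 ≠ 0 ∧ c w ∈ Complex.slitPlane} =
        {w : ℝ × ℝ × ℝ | w.2.2 ≠ 0} ∩ c ⁻¹' Complex.slitPlane := rfl
    rw [this]
    refine ContinuousOn.isOpen_inter_preimage ?_ ?_ Complex.isOpen_slitPlane
    · refine ContinuousOn.div (by fun_prop) (by fun_prop) fun w hw => ?_
      exact mul_ne_zero (pow_ne_zero _ (by exact_mod_cast hw)) hE0
    · exact isOpen_ne_fun (continuous_snd.comp continuous_snd) continuous_const
  · -- phiMap a ∈ V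
    refine ⟨ha, ?_⟩
    rw [key a ha]
    exact hslitmem _ (by rw [← hθ₀]; constructor <;> [simp [sub_self]; skip] <;>
      simp [Real.pi_pos])
  · -- smoothness of ψ on V
    rintro w ⟨hw1, hw2⟩
    apply ContDiffAt.contDiffWithinAt
    have hccd : ContDiffAt ℝ (⊤ : ℕ∞) c w := by
      rw [hc]
      simp only [div_eq_mul_inv]
      refine ContDiffAt.mul ?_ ?_
      · exact ((Complex.ofRealCLM.contDiff.comp contDiff_fst).add
          ((Complex.ofRealCLM.contDiff.comp (contDiff_fst.comp contDiff_snd)).mul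
            contDiff_const)).contDiffAt
      · refine ContDiffAt.comp w (contDiffAt_inv ℝ ?_) ?_
        · exact mul_ne_zero (pow_ne_zero _ (by exact_mod_cast hw1)) hE0
        · exact (((Complex.ofRealCLM.contDiff.comp
            (contDiff_snd.comp contDiff_snd)).pow k).mul contDiff_const).contDiffAt
    have hargcd : ContDiffAt ℝ (⊤ : ℕ∞) (fun w => Complex.arg (c w)) w :=
      (contDiffAt_arg' hw2).comp w hccd
    exact (((contDiffAt_snd.comp w contDiffAt_snd).mul
      (hargcd.add contDiffAt_const)).div contDiffAt_const (by positivity)).prodMk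
      (contDiffAt_snd.comp w contDiffAt_snd)
  · -- main property
    rintro b ⟨hb, hbIoo⟩
    have hmem : (2 * π * b.1 / b.2 - θ₀) ∈ Set.Ioo (-π) π := by
      constructor <;> [linarith [hbIoo.1]; linarith [hbIoo.2]]
    refine ⟨⟨hb, by rw [key b hb]; exact hslitmem _ hmem⟩, ?_⟩
    have harg : Complex.arg (c (phiMap k b)) = 2 * π * b.1 / b.2 - θ₀ := by
      rw [key b hb]; exact hargexp _ hmem
    show ((phiMap k b).2.2 * (Complex.arg (c (phiMap k b)) + θ₀) / (2 * π),
      (phiMap k b).2.2) = b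
    rw [harg, show (phiMap k b).2.2 = b.2 from rfl]
    have : b.2 * (2 * π * b.1 / b.2 - θ₀ + θ₀) / (2 * π) = b.1 := by
      field_simp; ring
    rw [this]

lemma phiMem (k : ℕ) (v : {v : ℝ × ℝ // v.2 ≠ 0}) :
    (phiMap k v.val).1 ^ 2 + (phiMap k v.val).2.1 ^ 2 = (phiMap k v.val).2.2 ^ (2 * k) ∧
      phiMap k v.val ≠ 0 :=
  ⟨phiSurf k v.val, fun h => v.prop (by simpa [phiMap] using congrArg (fun w => w.2.2) h)⟩

lemma secNe (k : ℕ) (hk : 2 ≤ k)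
    (w : {w : ℝ × ℝ × ℝ // w.1 ^ 2 + w.2.1 ^ 2 = w.2.2 ^ (2 * k) ∧ w ≠ 0}) :
    (secMap k w.val).2 ≠ 0 :=
  zNe k hk w.val w.prop.1 w.prop.2

noncomputable def quotToSurf (k : ℕ) :
    Quot zRel → {w : ℝ × ℝ × ℝ // w.1 ^ 2 + w.2.1 ^ 2 = w.2.2 ^ (2 * k) ∧ w ≠ 0} :=
  Quot.lift (fun v => ⟨phiMap k v.val, phiMem k v⟩) (by
    rintro a b ⟨n, h1, h2⟩
    apply Subtype.ext
    show phiMap k a.val = phiMap k b.val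
    have hb : b.val = (a.val.1 + n * a.val.2, a.val.2) := Prod.ext h1 h2
    rw [hb, phiResp k a.val.1 a.val.2 a.prop n])

noncomputable def surfToQuot (k : ℕ) (hk : 2 ≤ k) :
    {w : ℝ × ℝ × ℝ // w.1 ^ 2 + w.2.1 ^ 2 = w.2.2 ^ (2 * k) ∧ w ≠ 0} → Quot zRel :=
  fun w => Quot.mk zRel ⟨secMap k w.val, secNe k hk w⟩

lemma leftInv (k : ℕ) (hk : 2 ≤ k) (x : Quot zRel) :
    surfToQuot k hk (quotToSurf k x) = x := by
  induction x using Quot.ind with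
  | _ a =>
    show Quot.mk zRel _ = Quot.mk zRel a
    obtain ⟨m, hm⟩ := secPhi k a.val a.prop
    apply Quot.sound
    refine ⟨-m, ?_, ?_⟩
    · show a.val.1 = (secMap k (phiMap k a.val)).1 + (-m : ℤ) * (secMap k (phiMap k a.val)).2
      rw [hm]; push_cast; ring
    · show a.val.2 = (secMap k (phiMap k a.val)).2
      rw [hm]

lemma rightInv (k : ℕ) (hk : 2 ≤ k)
    (w : {w : ℝ × ℝ × ℝ // w.1 ^ 2 + w.2.1 ^ 2 = w.2.2 ^ (2 * k) ∧ w ≠ 0}) :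
    quotToSurf k (surfToQuot k hk w) = w :=
  Subtype.ext (phiSec k w.val (zNe k hk w.val w.prop.1 w.prop.2) w.prop.1)

lemma contQuotToSurf (k : ℕ) : Continuous (quotToSurf k) := by
  apply continuous_quot_lift
  apply Continuous.subtype_mk
  have hc1 : Continuous fun v : {v : ℝ × ℝ // v.2 ≠ 0} => 2 * π * v.val.1 / v.val.2 :=
    Continuous.div (by fun_prop) (by fun_prop) fun v => v.prop
  show Continuous fun v : {v : ℝ × ℝ // v.2 ≠ 0} =>
    (v.val.2 ^ k * Real.cos (2 * π * v.val.1 / v.val.2),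
     v.val.2 ^ k * Real.sin (2 * π * v.val.1 / v.val.2), v.val.2)
  exact Continuous.prodMk ((by fun_prop : Continuous fun v : {v : ℝ × ℝ // v.2 ≠ 0} =>
      v.val.2 ^ k).mul (Real.continuous_cos.comp hc1))
    (Continuous.prodMk ((by fun_prop : Continuous fun v : {v : ℝ × ℝ // v.2 ≠ 0} =>
      v.val.2 ^ k).mul (Real.continuous_sin.comp hc1)) (by fun_prop))

lemma contSurfToQuot (k : ℕ) (hk : 2 ≤ k) : Continuous (surfToQuot k hk) := by
  set S := {w : ℝ × ℝ × ℝ // w.1 ^ 2 + w.2.1 ^ 2 = w.2.2 ^ (2 * k) ∧ w ≠ 0} with hS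
  rw [continuous_iff_continuousAt]
  intro w₀
  have hz : ∀ w : S, w.val.2.2 ≠ 0 := fun w => zNe k hk w.val w.prop.1 w.prop.2
  set c : S → ℂ := fun w =>
    ((w.val.1 : ℂ) + (w.val.2.1 : ℂ) * Complex.I) / (w.val.2.2 : ℂ) ^ k with hc
  have habs : ∀ w : S, ‖c w‖ = 1 := fun w => absC k w.val (hz w) w.prop.1
  have hc0 : ∀ w : S, c w ≠ 0 := by
    intro w h
    have := habs w
    rw [h] at this
    simp at this
  have hccont : ∀ w : S, ContinuousAt c w := by
    intro w
    rw [hc]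
    exact ContinuousAt.div (by fun_prop) (by fun_prop)
      (pow_ne_zero _ (by exact_mod_cast hz w))
  -- continuity given a continuous-at-arg point
  have haux : ∀ (f : S → ℝ) (w : S), ContinuousAt f w →
      ContinuousAt (fun w : S => Quot.mk zRel
        (⟨(w.val.2.2 * f w / (2 * π), w.val.2.2), hz w⟩ : {v : ℝ × ℝ // v.2 ≠ 0})) w := by
    intro f w hf
    apply ContinuousAt.comp (Continuous.continuousAt continuous_quot_mk)
    have h2 : ContinuousAt (fun w : S => ((w.val.2.2 * f w / (2 * π), w.val.2.2) : ℝ × ℝ)) w := ContinuousAt.prodMk (((by fun_prop : ContinuousAt (fun w : S => w.val.2.2) w).mul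
      hf).div continuousAt_const (by positivity)) (by fun_prop)
    refine (Topology.IsInducing.continuousAt_iff (Topology.IsInducing.subtypeVal (t := {v : ℝ × ℝ | v.2 ≠ 0}))).2 ?_
    exact h2
  by_cases hsl : c w₀ ∈ Complex.slitPlane
  · show ContinuousAt (fun w : S => Quot.mk zRel ⟨secMap k w.val, secNe k hk w⟩) w₀
    exact haux (fun w => Complex.arg (c w)) w₀
      ((Complex.continuousAt_arg hsl).comp (hccont w₀))
  · -- c w₀ = -1
    have heq : (fun w : S => Quot.mk zRel ⟨secMap k w.val, secNe k hk w⟩) =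
        fun w : S => Quot.mk zRel
          ⟨(w.val.2.2 * (Complex.arg (-(c w)) + π) / (2 * π), w.val.2.2), hz w⟩ := by
      funext w
      apply Quot.sound
      obtain ⟨n, hn⟩ := argNegRel (c w) (hc0 w)
      refine ⟨-n, ?_, rfl⟩
      show w.val.2.2 * (Complex.arg (-(c w)) + π) / (2 * π)
        = w.val.2.2 * Complex.arg (c w) / (2 * π) + (-n : ℤ) * w.val.2.2
      rw [hn]
      have hπ : (π : ℝ) ≠ 0 := Real.pi_ne_zero
      push_cast
      field_simp
      ring
    show ContinuousAt (fun w : S => Quot.mk zRel ⟨secMap k w.val, secNe k hk w⟩) w₀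
    rw [heq]
    have hslneg : -(c w₀) ∈ Complex.slitPlane := by
      have him : (c w₀).re ≤ 0 ∧ (c w₀).im = 0 := by
        rw [Complex.mem_slitPlane_iff] at hsl
        push_neg at hsl
        exact ⟨hsl.1, hsl.2⟩
      rw [Complex.mem_slitPlane_iff]
      left
      have hsq := Complex.sq_norm (c w₀)
      rw [habs w₀, Complex.normSq_apply] at hsq
      simp only [Complex.neg_re, him.2] at *
      nlinarith [him.1]
    have hargneg : ContinuousAt (fun w : S => Complex.arg (-(c w))) w₀ :=
      ContinuousAt.comp (g := Complex.arg) (f := fun w : S => -(c w))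
        (Complex.continuousAt_arg hslneg) ((hccont w₀).neg)
    exact haux (fun w => Complex.arg (-(c w)) + π) w₀ (hargneg.add continuousAt_const)

/-- `φ_k` induces a diffeomorphism `(ℝ × ℝ*)/ℤ ≃ A_{2k} \ {0}`: it descends to
a homeomorphism of the quotient onto `A_{2k} \ {0}`, is smooth on `{q ≠ 0}`,
and around every point admits a smooth local inverse defined on an open set of
`ℝ³` (so it is a local diffeomorphism onto the surface). -/
theorem stmt11 (k : ℕ) (hk : 2 ≤ k) :
    ∃ e : Quot zRel ≃ₜ
        {w : ℝ × ℝ × ℝ // w.1 ^ 2 + w.2.1 ^ 2 = w.2.2 ^ (2 * k) ∧ w ≠ 0},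
      (∀ a : {v : ℝ × ℝ // v.2 ≠ 0}, (e (Quot.mk zRel a)).val = phiMap k a.val) ∧
      ContDiffOn ℝ (⊤ : ℕ∞) (phiMap k) {v : ℝ × ℝ | v.2 ≠ 0} ∧
      ∀ a : ℝ × ℝ, a.2 ≠ 0 →
        ∃ (U : Set (ℝ × ℝ)) (V : Set (ℝ × ℝ × ℝ)) (ψ : ℝ × ℝ × ℝ → ℝ × ℝ),
          IsOpen U ∧ a ∈ U ∧ IsOpen V ∧ phiMap k a ∈ V ∧
          ContDiffOn ℝ (⊤ : ℕ∞) ψ V ∧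
          ∀ b ∈ U, phiMap k b ∈ V ∧ ψ (phiMap k b) = b := by
  refine ⟨⟨⟨quotToSurf k, surfToQuot k hk, leftInv k hk, rightInv k hk⟩,
    contQuotToSurf k, contSurfToQuot k hk⟩, fun a => rfl, phiSmooth k,
    fun a ha => localInv k a ha⟩
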